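/- Let n ≥ r ≥ 2, let u ∈ ℝⁿ be the all-ones vector, let A be an n×(r−1) real matrix of rank r−1 with uᵀA = 0, let α ≠ 0 be real, and set X = (1/α)·(Aᵀ·A)⁻¹·Aᵀ (the rescaled Moore–Penrose left inverse of A). Then: (1) X·A = (1/α)·I_{r−1}; (2) the matrix Φ* = I_n + ((α−1)/α)·Xᵀ·(X·Xᵀ)⁻¹·(Aᵀ·A)⁻¹·Aᵀ simplifies to Φ* = I_n + α(α−1)·A·X; and (3) Φ* acts as a Protourgleichung: Φ*·((1/n)·u + A·v) = (1/n)·u + α·(A·v) for every v ∈ ℝ^{r−1}. -/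
import Mathlib


open Matrix

lemma isUnit_of_rank_eq_card {m : Type*} [Fintype m] [DecidableEq m]
    (B : Matrix m m ℝ) (h : B.rank = Fintype.card m) : IsUnit B := by
  rw [← Matrix.mulVec_injective_iff_isUnit]
  have hsurj : Function.Surjective B.mulVecLin := by
    rw [← LinearMap.range_eq_top]
    apply Submodule.eq_top_of_finrank_eq
    rw [show Module.finrank ℝ (LinearMap.range B.mulVecLin) = B.rank from rfl, h,
      Module.finrank_fintype_fun_eq_card]
  have hinj : Function.Injective B.mulVecLin :=
    (LinearMap.injective_iff_surjective).mpr hsurj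
  exact hinj

/-- When `X = (1/α)·(AᵀA)⁻¹·Aᵀ` is (the rescaling of) the
Moore–Penrose left inverse of `A`, then (1) `X·A = (1/α)·I`; (2) the
Frobenius-minimal Born matrix `Φ* = I + ((α−1)/α)·Xᵀ·(XXᵀ)⁻¹·(AᵀA)⁻¹·Aᵀ`
simplifies to `Φ* = I + α(α−1)·A·X`; and (3) `Φ*` acts as a Protourgleichung:
`Φ*·((1/n)·u + A·v) = (1/n)·u + α·(A·v)`. -/
theorem pseudoinverse_states_protourgleichung
    (n r : ℕ) (hr : 2 ≤ r) (hnr : r ≤ n)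
    (u : Fin n → ℝ) (hu : u = fun _ => 1)
    (A : Matrix (Fin n) (Fin (r - 1)) ℝ) (hArank : A.rank = r - 1)
    (hA : ∀ j, ∑ i, A i j = 0)
    (α : ℝ) (hα : α ≠ 0)
    (X : Matrix (Fin (r - 1)) (Fin n) ℝ)
    (hX : X = α⁻¹ • ((Aᵀ * A)⁻¹ * Aᵀ))
    (Φ : Matrix (Fin n) (Fin n) ℝ)
    (hΦ : Φ = 1 + ((α - 1) / α) • (Xᵀ * (X * Xᵀ)⁻¹ * (Aᵀ * A)⁻¹ * Aᵀ)) :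
    X * A = α⁻¹ • 1 ∧
    Φ = 1 + (α * (α - 1)) • (A * X) ∧
    ∀ v : Fin (r - 1) → ℝ,
      Φ.mulVec ((n : ℝ)⁻¹ • u + A.mulVec v) =
        (n : ℝ)⁻¹ • u + α • A.mulVec v := by
  set B := Aᵀ * A with hB
  have hBunit : IsUnit B := by
    apply isUnit_of_rank_eq_card
    rw [hB, Matrix.rank_transpose_mul_self, hArank, Fintype.card_fin]
  have hBdet : IsUnit B.det := (Matrix.isUnit_iff_isUnit_det B).mp hBunit
  have hinvB : B⁻¹ * B = 1 := Matrix.nonsing_inv_mul B hBdet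
  have hBinv : B * B⁻¹ = 1 := Matrix.mul_nonsing_inv B hBdet
  -- Part 1
  have h1 : X * A = α⁻¹ • 1 := by
    rw [hX, Matrix.smul_mul, Matrix.mul_assoc, ← hB, hinvB]
  -- Part 2
  have hBsymm : Bᵀ = B := by rw [hB, Matrix.transpose_mul, Matrix.transpose_transpose]
  have hBinvsymm : (B⁻¹)ᵀ = B⁻¹ := by rw [Matrix.transpose_nonsing_inv, hBsymm]
  have hXT : Xᵀ = α⁻¹ • (A * B⁻¹) := by
    rw [hX, Matrix.transpose_smul, Matrix.transpose_mul, Matrix.transpose_transpose,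
      hBinvsymm]
  have hXXT : X * Xᵀ = (α⁻¹ * α⁻¹) • B⁻¹ := by
    rw [hXT, hX, Matrix.smul_mul, Matrix.mul_smul, smul_smul, Matrix.mul_assoc,
      ← Matrix.mul_assoc Aᵀ A B⁻¹, ← hB, hBinv, Matrix.mul_one]
  have hXXTinv : (X * Xᵀ)⁻¹ = (α * α) • B := by
    apply Matrix.inv_eq_right_inv
    rw [hXXT, Matrix.smul_mul, Matrix.mul_smul, smul_smul, hinvB]
    rw [show α⁻¹ * α⁻¹ * (α * α) = 1 by field_simp]
    simp
  have h2 : Φ = 1 + (α * (α - 1)) • (A * X) := by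
    rw [hΦ, hXXTinv, hXT, hX]
    congr 1
    rw [Matrix.smul_mul, Matrix.mul_smul, Matrix.smul_mul, Matrix.smul_mul, smul_smul,
      Matrix.mul_smul, smul_smul]
    rw [Matrix.smul_mul, Matrix.smul_mul, smul_smul,
      Matrix.mul_assoc A B⁻¹ B, hinvB, Matrix.mul_one, Matrix.mul_assoc A B⁻¹ Aᵀ]
    congr 1
    field_simp
  refine ⟨h1, h2, ?_⟩
  -- Part 3
  intro v
  have hAu : Aᵀ.mulVec u = 0 := by
    funext j
    simp only [Matrix.mulVec, dotProduct, Matrix.transpose_apply, hu, mul_one,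
      Pi.zero_apply]
    exact hA j
  have hXu : X.mulVec u = 0 := by
    rw [hX, Matrix.smul_mulVec, ← Matrix.mulVec_mulVec, hAu]
    simp
  have hXAv : X.mulVec (A.mulVec v) = α⁻¹ • v := by
    rw [Matrix.mulVec_mulVec, h1, Matrix.smul_mulVec, Matrix.one_mulVec]
  rw [h2, Matrix.add_mulVec, Matrix.one_mulVec, Matrix.smul_mulVec,
    ← Matrix.mulVec_mulVec, Matrix.mulVec_add, Matrix.mulVec_smul, hXu, hXAv]
  rw [smul_zero, zero_add, Matrix.mulVec_smul, smul_smul]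
  rw [show α * (α - 1) * α⁻¹ = α - 1 by field_simp]
  module
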